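/- Let (X,d) be a metric space, R a relation on X, T : X → X an R-increasing map which is Meir-Keeler (d,R;G)-contractive for some G ∈ 𝒢, and x₀ ∈ X with x₀ R Tx₀. Set x_n := Tⁿx₀ and assume x_n ≠ x_{n+1} for all n ≥ 0. Then the map n ↦ x_n is injective: i ≠ j implies x_i ≠ x_j. -/

import Mathlib

open Filter Topology

namespace Paper

variable {X : Type*} [MetricSpace X]

/-- `A₁(x,y) = d(x,y)`. -/
noncomputable def A1 (T : X → X) (x y : X) : ℝ := dist x y

/-- `A₂(x,y) = (1/2)[d(x,Tx) + d(y,Ty)]`. -/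
noncomputable def A2 (T : X → X) (x y : X) : ℝ := (dist x (T x) + dist y (T y)) / 2

/-- `A₃(x,y) = max{d(x,Tx), d(y,Ty)}`. -/
noncomputable def A3 (T : X → X) (x y : X) : ℝ := max (dist x (T x)) (dist y (T y))

/-- `A₄(x,y) = (1/2)[d(x,Ty) + d(Tx,y)]`. -/
noncomputable def A4 (T : X → X) (x y : X) : ℝ := (dist x (T y) + dist (T x) y) / 2

/-- `B₁(x,y) = diam{x, Tx, y, Ty}`. -/
noncomputable def B1 (T : X → X) (x y : X) : ℝ := Metric.diam ({x, T x, y, T y} : Set X)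

noncomputable def B2 (T : X → X) (x y : X) : ℝ := max (A1 T x y) (A2 T x y)
noncomputable def B3 (T : X → X) (x y : X) : ℝ := max (A1 T x y) (A3 T x y)
noncomputable def B4 (T : X → X) (x y : X) : ℝ := max (A1 T x y) (A4 T x y)
noncomputable def C1 (T : X → X) (x y : X) : ℝ := max (A1 T x y) (max (A2 T x y) (A4 T x y))
noncomputable def C2 (T : X → X) (x y : X) : ℝ := max (A1 T x y) (max (A3 T x y) (A4 T x y))

/-- The class `𝒢 = {A₁, B₂, B₃, B₄, C₁, C₂}`. -/
noncomputable def calG (T : X → X) : Set (X → X → ℝ) :=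
  {A1 T, B2 T, B3 T, B4 T, C1 T, C2 T}

/-- The class `𝒢₁ = {A₁, B₂, B₄, C₁}`. -/
noncomputable def calG1 (T : X → X) : Set (X → X → ℝ) :=
  {A1 T, B2 T, B4 T, C1 T}

/-- `T` is strictly `(d,R;G)`-nonexpansive: `x R̃ y` implies `d(Tx,Ty) < G(x,y)`. -/
def StrictlyNonexpansive (R : X → X → Prop) (T : X → X) (G : X → X → ℝ) : Prop :=
  ∀ x y, R x y → x ≠ y → dist (T x) (T y) < G x y

/-- `T` is Meir-Keeler `(d,R;G)`-contractive. -/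
def MeirKeelerContractive (R : X → X → Prop) (T : X → X) (G : X → X → ℝ) : Prop :=
  StrictlyNonexpansive R T G ∧
  ∀ ε : ℝ, 0 < ε → ∃ δ : ℝ, 0 < δ ∧
    ∀ x y, R x y → x ≠ y → ε < G x y → G x y < ε + δ → dist (T x) (T y) ≤ ε

/-- `φ ∈ F(re)(ℝ₊)`: `φ : ℝ₊ → ℝ₊` with `φ(0) = 0` and `φ(t) < t` for `t > 0`. -/
def Regressive (φ : ℝ → ℝ) : Prop :=
  φ 0 = 0 ∧ (∀ t, 0 ≤ t → 0 ≤ φ t) ∧ (∀ t, 0 < t → φ t < t)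

/-- `φ` is Meir-Keeler admissible. -/
def MKAdmissible (φ : ℝ → ℝ) : Prop :=
  ∀ γ : ℝ, 0 < γ → ∃ β : ℝ, 0 < β ∧ β < γ ∧ ∀ t, γ ≤ t → t < γ + β → φ t ≤ γ

/-- `T` is `(d,R;G,φ)`-contractive. -/
def PhiContractive (R : X → X → Prop) (T : X → X) (G : X → X → ℝ) (φ : ℝ → ℝ) : Prop :=
  ∀ x y, R x y → x ≠ y → dist (T x) (T y) ≤ φ (G x y)

/-- `(ψ,φ)` is a pair of weak generalized altering functions in `F(ℝ₊)`. -/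
def WeakAlteringPair (ψ φ : ℝ → ℝ) : Prop :=
  (∀ s t, 0 ≤ s → s ≤ t → ψ s ≤ ψ t) ∧
  (∀ t, 0 ≤ t → 0 ≤ ψ t) ∧ (∀ t, 0 ≤ t → 0 ≤ φ t) ∧
  φ 0 = 0 ∧
  (∀ ε : ℝ, 0 < ε → ψ ε - Function.leftLim ψ ε < φ ε) ∧
  (∀ ε : ℝ, 0 < ε → ∀ t : ℕ → ℝ,
    Tendsto t atTop (nhds ε) → (∀ᶠ n in atTop, ε < t n) →
    Function.rightLim ψ ε - ψ ε < Filter.limsup (fun n => φ (t n)) atTop)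

/-- `T` is `(d,R;G,(ψ,φ))`-contractive. -/
def PsiPhiContractive (R : X → X → Prop) (T : X → X) (G : X → X → ℝ) (ψ φ : ℝ → ℝ) : Prop :=
  ∀ x y, R x y → x ≠ y → ψ (dist (T x) (T y)) ≤ ψ (G x y) - φ (G x y)

/-- `(z_n)` is `R`-ascending. -/
def Ascending (R : X → X → Prop) (z : ℕ → X) : Prop := ∀ n, R (z n) (z (n + 1))

/-- `(z_n)` is `T`-orbital: a subsequence of `(Tⁿ x)` for some `x`. -/
def Orbital (T : X → X) (z : ℕ → X) : Prop :=
  ∃ x : X, ∃ i : ℕ → ℕ, Tendsto i atTop atTop ∧ ∀ n, z n = T^[i n] x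

/-- `X` is `(a-o,d)`-complete. -/
def AOComplete (R : X → X → Prop) (T : X → X) : Prop :=
  ∀ z : ℕ → X, Ascending R z → Orbital T z → CauchySeq z → ∃ l, Tendsto z atTop (nhds l)

/-- `T` is `(a-o,d)`-continuous. -/
def AOContinuous (R : X → X → Prop) (T : X → X) : Prop :=
  ∀ z : ℕ → X, ∀ l : X, Ascending R z → Orbital T z → Tendsto z atTop (nhds l) →
    Tendsto (fun n => T (z n)) atTop (nhds (T l))

/-- `R` is `(a-o,d)`-almost-selfclosed. -/
def AlmostSelfClosed (R : X → X → Prop) (T : X → X) : Prop :=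
  ∀ z : ℕ → X, ∀ l : X, Ascending R z → Orbital T z → Tendsto z atTop (nhds l) →
    ∃ i : ℕ → ℕ, Tendsto i atTop atTop ∧ ∀ n, R (z (i n)) l

/-- the spectrum `spec(x) = {i ≥ 1 : x R Tⁱx}`. -/
def spec (R : X → X → Prop) (T : X → X) (x : X) : Set ℕ := {i | 1 ≤ i ∧ R x (T^[i] x)}

/-- `R` is `k`-semi-recurrent at `x`. -/
def SemiRecurrentAt (R : X → X → Prop) (T : X → X) (x : X) (k : ℕ) : Prop :=
  ∀ n : ℕ, 1 ≤ n → ∃ q ∈ spec R T x, q ≤ n ∧ n < q + k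

/-- `x` is orbital admissible. -/
def OrbAdmissible (T : X → X) (x : X) : Prop :=
  ∀ i j : ℕ, i ≠ j → T^[i] x ≠ T^[j] x

/-- `R` is finitely semi-recurrent. -/
def FinSemiRecurrent (R : X → X → Prop) (T : X → X) : Prop :=
  ∀ x : X, R x (T x) → OrbAdmissible T x → ∃ k : ℕ, 1 ≤ k ∧ SemiRecurrentAt R T x k

/-- the map `n ↦ Tⁿx₀` is injective. -/
lemma G_le_max {X : Type*} [MetricSpace X] (T : X → X) (G : X → X → ℝ)
    (hG : G ∈ calG T) (x : X) :
    G x (T x) ≤ max (dist x (T x)) (dist (T x) (T (T x))) := by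
  set a := dist x (T x) with ha
  set b := dist (T x) (T (T x)) with hb
  have ha0 : 0 ≤ a := dist_nonneg
  have hb0 : 0 ≤ b := dist_nonneg
  have hA1 : A1 T x (T x) ≤ max a b := by
    simp only [A1, ← ha]; exact le_max_left _ _
  have hA2 : A2 T x (T x) ≤ max a b := by
    simp only [A2, ← ha, ← hb]
    have : a + b ≤ max a b + max a b :=
      add_le_add (le_max_left _ _) (le_max_right _ _)
    linarith
  have hA3 : A3 T x (T x) ≤ max a b := by
    simp only [A3, ← ha, ← hb]; exact le_refl _
  have hA4 : A4 T x (T x) ≤ max a b := by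
    simp only [A4, ← ha, ← hb]
    have h1 : dist x (T (T x)) ≤ a + b := dist_triangle _ _ _
    have h2 : dist (T x) (T x) = 0 := dist_self _
    have : a + b ≤ max a b + max a b :=
      add_le_add (le_max_left _ _) (le_max_right _ _)
    rw [h2]
    linarith
  simp only [calG, Set.mem_insert_iff, Set.mem_singleton_iff] at hG
  rcases hG with h | h | h | h | h | h <;> subst h
  · exact hA1
  · exact max_le hA1 hA2
  · exact max_le hA1 hA3
  · exact max_le hA1 hA4
  · exact max_le hA1 (max_le hA2 hA4)
  · exact max_le hA1 (max_le hA3 hA4)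

theorem orbit_injective {X : Type*} [MetricSpace X]
    (R : X → X → Prop) (T : X → X)
    (hinc : ∀ x y : X, R x y → R (T x) (T y))
    (G : X → X → ℝ) (hG : G ∈ calG T)
    (hMK : MeirKeelerContractive R T G)
    (x₀ : X) (hx₀ : R x₀ (T x₀))
    (hne : ∀ n : ℕ, T^[n] x₀ ≠ T^[n + 1] x₀)
 :
    Function.Injective (fun n : ℕ => T^[n] x₀) := by
  have hR : ∀ n : ℕ, R (T^[n] x₀) (T^[n + 1] x₀) := by
    intro n
    induction n with
    | zero => simpa using hx₀
    | succ k ih =>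
      have h := hinc _ _ ih
      simpa only [← Function.iterate_succ_apply'] using h
  set ρ : ℕ → ℝ := fun n => dist (T^[n] x₀) (T^[n + 1] x₀) with hρ
  have key : ∀ n : ℕ, ρ (n + 1) < ρ n := by
    intro n
    set x := T^[n] x₀ with hx
    have hTx : T x = T^[n + 1] x₀ := (Function.iterate_succ_apply' T n x₀).symm
    have hTTx : T (T x) = T^[n + 2] x₀ := by
      rw [hTx]; exact (Function.iterate_succ_apply' T (n + 1) x₀).symm
    have hne' : x ≠ T x := by rw [hTx]; exact hne n
    have hRx : R x (T x) := by rw [hTx]; exact hR n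
    have hlt : dist (T x) (T (T x)) < G x (T x) := hMK.1 x (T x) hRx hne'
    have hle : G x (T x) ≤ max (dist x (T x)) (dist (T x) (T (T x))) :=
      G_le_max T G hG x
    have h2 : dist (T x) (T (T x)) < max (dist x (T x)) (dist (T x) (T (T x))) :=
      lt_of_lt_of_le hlt hle
    have h3 : dist (T x) (T (T x)) < dist x (T x) := by
      rcases max_cases (dist x (T x)) (dist (T x) (T (T x))) with ⟨he, _⟩ | ⟨he, _⟩
      · rwa [he] at h2
      · rw [he] at h2; exact absurd h2 (lt_irrefl _)
    have e1 : ρ (n + 1) = dist (T x) (T (T x)) := by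
      show dist (T^[n + 1] x₀) (T^[n + 1 + 1] x₀) = _
      rw [Function.iterate_succ_apply' T (n + 1) x₀, ← hTx]
    have e2 : ρ n = dist x (T x) := by simp only [hρ, hTx, hx]; rw [Function.iterate_succ_apply']
    rw [e1, e2]; exact h3
  have hanti : StrictAnti ρ := strictAnti_nat_of_succ_lt key
  have main : ∀ i j : ℕ, i < j → T^[i] x₀ ≠ T^[j] x₀ := by
    intro i j hlt hij
    have hρeq : ρ i = ρ j := by
      have h1 : T^[i + 1] x₀ = T^[j + 1] x₀ := by
        rw [Function.iterate_succ_apply' T i, Function.iterate_succ_apply' T j, hij]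
      simp only [hρ, hij, h1]
    exact absurd hρeq (ne_of_gt (hanti hlt))
  intro i j hij
  simp only at hij
  by_contra hne'
  rcases lt_or_gt_of_ne hne' with h | h
  · exact main i j h hij
  · exact main j i h hij.symm

end Paper
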